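/- For X = P^1 and integers n ≥ k ≥ 0, there is a short exact sequence of holomorphic vector bundles 0 → O(-(k+1)) ⊗ Sym^{n-k-1}(V) → O_X ⊗ Sym^n(V) → J^k(O(n)) → 0, where the first map is the (k+1)-fold iteration of the multiplication map induced by the tautological inclusion of the sub-line-bundle of X × V; consequently J^k(O(n)) has rank k+1 and degree (k+1)(n-k). -/

import Mathlib

/-!
STATEMENT 16: For X = P¹ and integers n ≥ k ≥ 0, there is a short exact sequence of
holomorphic vector bundles
  0 → O(-(k+1)) ⊗ Sym^{n-k-1}(V) → O_X ⊗ Sym^n(V) → J^k(O(n)) → 0,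
where the first map is the (k+1)-fold iteration of the multiplication map induced by the
tautological inclusion of the sub-line-bundle of X × V; consequently J^k(O(n)) has rank k+1
and degree (k+1)(n-k).

Formalization notes (two-chart model): in the affine chart z on U₀ with the standard
trivialization, the trivial bundle O_X ⊗ Sym^n(V) has fiber H⁰(O(n)) = {polynomials of
degree ≤ n} with monomial basis (t^α)_{0≤α≤n}; the fiber of J^k(O(n)) at z is ℂ^{k+1}
(Taylor coefficients of order ≤ k at z); and O(-(k+1)) ⊗ Sym^{n-k-1}(V) has fiber ℂ^{n-k}
with basis (t^β)_{0≤β≤n-k-1}.  The surjection is the k-jet evaluation with matrix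
  (G₀)_{iα}(z) = C(α,i)·z^{α-i}  (Taylor coefficient i of t^α at t = z),
and the tautological multiplication map (multiplication by the (k+1)-st power of the local
equation (t - z) of the point z, i.e. of the tautological sub-line bundle) has matrix
  (F₀)_{αβ}(z) = C(k+1, α-β)·(-z)^{k+1-(α-β)}  (coefficient of t^α in (t-z)^{k+1} t^β).
The theorem asserts:
(1) fiberwise exactness at every z ∈ ℂ: F₀(z) injective, G₀(z) surjective,
    ker G₀(z) = range F₀(z)  (and by the chart-1 regularity (2),(3) this holds on all of P¹);
(2),(3) both maps are morphisms of bundles, i.e. in the chart at ∞ they are again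
    holomorphic: G₁ := (jet transition)⁻¹·G₀ has entries in ℂ[z⁻¹], and
    F₁ := F₀·z^{-(k+1)} has entries in ℂ[z⁻¹] (the transition matrix of J^k(O(n)) is
    `jetTransition n k`, cf. STATEMENT 10; the trivial bundle has transition 1 and
    O(-(k+1))^{⊕(n-k)} has transition z^{-(k+1)}·1);
(4) the degree count: det(jetTransition n k) = c·z^{(k+1)(n-k)} with c ≠ 0, i.e. J^k(O(n))
    has degree (k+1)(n-k); its rank is k+1 by construction (the matrix is (k+1)×(k+1)).
-/

open LaurentPolynomial Polynomial

/-- Generalized binomial coefficient `C(a, r) = a(a-1)⋯(a-r+1)/r!`. -/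
noncomputable def gbinom (a : ℤ) (r : ℕ) : ℂ :=
  (∏ t ∈ Finset.range r, ((a : ℂ) - (t : ℂ))) / (Nat.factorial r : ℂ)

/-- The transition matrix of `J^k(O(n))` on `P¹` (cf. STATEMENT 10). -/
noncomputable def jetTransition (n : ℤ) (k : ℕ) :
    Matrix (Fin (k + 1)) (Fin (k + 1)) (LaurentPolynomial ℂ) :=
  Matrix.of fun i j =>
    if j.val ≤ i.val then
      LaurentPolynomial.C ((-1 : ℂ) ^ j.val * gbinom (n - j.val) (i.val - j.val)) *
        T (n - i.val - j.val)
    else 0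

/-- `f` is holomorphic on the chart at infinity: only nonpositive powers of `z` occur. -/
def IsAntiPolyFun (f : LaurentPolynomial ℂ) : Prop := ∀ i : ℤ, 0 < i → f.coeff i = 0

/-- Chart-0 matrix of the k-jet evaluation `O_X ⊗ Sym^n(V) → J^k(O(n))`. -/
noncomputable def G0 (n k : ℕ) : Matrix (Fin (k + 1)) (Fin (n + 1)) (Polynomial ℂ) :=
  Matrix.of fun i α => Polynomial.C (α.val.choose i.val : ℂ) * X ^ (α.val - i.val)

/-- Chart-0 matrix of the tautological multiplication map
`O(-(k+1)) ⊗ Sym^{n-k-1}(V) → O_X ⊗ Sym^n(V)` (multiplication by the (k+1)-st power of the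
local equation of the tautological sub-line bundle). -/
noncomputable def F0 (n k : ℕ) : Matrix (Fin (n + 1)) (Fin (n - k)) (Polynomial ℂ) :=
  Matrix.of fun α β =>
    if β.val ≤ α.val ∧ α.val ≤ β.val + k + 1 then
      Polynomial.C ((k + 1).choose (α.val - β.val) : ℂ) * (-X) ^ (k + 1 - (α.val - β.val))
    else 0



lemma gbinom_natCast (a r : ℕ) : gbinom (a : ℤ) r = (a.choose r : ℂ) := by
  have hprod : (∏ t ∈ Finset.range r, (((a:ℤ) : ℂ) - (t : ℂ))) = (a.descFactorial r : ℂ) := by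
    rcases le_or_gt r a with h | h
    · rw [Nat.descFactorial_eq_prod_range, Nat.cast_prod]
      refine Finset.prod_congr rfl fun t ht => ?_
      have : t ≤ a := le_trans (Nat.le_of_lt_succ (Nat.lt_succ_of_lt (Finset.mem_range.mp ht))) h
      push_cast [Nat.cast_sub this]
      ring
    · rw [Nat.descFactorial_eq_zero_iff_lt.mpr h, Nat.cast_zero]
      apply Finset.prod_eq_zero (Finset.mem_range.mpr h)
      push_cast; ring
  rw [gbinom, hprod, Nat.descFactorial_eq_factorial_mul_choose, Nat.cast_mul]
  have hf : (Nat.factorial r : ℂ) ≠ 0 := by exact_mod_cast Nat.factorial_ne_zero r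
  field_simp

lemma keyGen (m b i : ℕ) :
    ∑ r ∈ Finset.range (m+1), ((-1:ℂ))^r * (m.choose r) * ((b+r).choose i)
      = (-1:ℂ)^m * (if m ≤ i then (b.choose (i-m) : ℂ) else 0) := by
  have key : ((X+1:ℂ[X])^b * (-X)^m)
      = ∑ r ∈ Finset.range (m+1), Polynomial.C ((-1:ℂ)^r * (m.choose r)) * (X+1)^(b+r) := by
    have h0 : (-X : ℂ[X]) = -(X+1) + 1 := by ring
    rw [h0, add_pow (-(X+1):ℂ[X]) 1 m, Finset.mul_sum]
    refine Finset.sum_congr rfl fun r hr => ?_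
    rw [neg_pow, one_pow, pow_add, map_mul, map_pow, map_neg, map_one, ← Polynomial.C_eq_natCast]
    ring
  have h1 := congrArg (fun p : ℂ[X] => p.coeff i) key
  simp only [Polynomial.finset_sum_coeff, Polynomial.coeff_C_mul,
    Polynomial.coeff_X_add_one_pow] at h1
  rw [← h1]
  have h2 : (X+1:ℂ[X])^b * (-X)^m = Polynomial.C ((-1:ℂ)^m) * ((X+1)^b * X^m) := by
    rw [map_pow, map_neg, map_one]; ring
  rw [h2, Polynomial.coeff_C_mul, Polynomial.coeff_mul_X_pow',
    Polynomial.coeff_X_add_one_pow]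

lemma keyB (N a i : ℕ) (ha : a ≤ N) (hi : i ≤ N) :
    ∑ j ∈ Finset.range (i+1), ((-1:ℂ))^j * ((N-j).choose (i-j)) * ((N-a).choose j)
      = (a.choose i : ℂ) := by
  set m := N - a with hm
  have key : ((X+1:ℂ[X]))^a
      = ∑ j ∈ Finset.range (m+1), Polynomial.C (((-1:ℂ))^j * ((m.choose j : ℂ))) * (X^j * (X+1)^(N-j)) := by
    have h1 : ((X+1:ℂ[X]))^a = ((-X) + (X+1))^m * (X+1)^a := by
      have : ((-X) + (X+1) : ℂ[X]) = 1 := by ring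
      rw [this, one_pow, one_mul]
    rw [h1, add_pow ((-X):ℂ[X]) (X+1) m, Finset.sum_mul]
    refine Finset.sum_congr rfl fun j hj => ?_
    have hj' : j ≤ m := Nat.lt_succ_iff.mp (Finset.mem_range.mp hj)
    have hNj : (X+1:ℂ[X])^(m-j) * (X+1)^a = (X+1)^(N-j) := by
      rw [← pow_add]; congr 1; omega
    rw [neg_pow, ← Polynomial.C_eq_natCast, map_mul, map_pow, map_neg, map_one, ← hNj]
    ring
  have h1 := congrArg (fun p : ℂ[X] => p.coeff i) key
  simp only [Polynomial.finset_sum_coeff, Polynomial.coeff_C_mul,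
    Polynomial.coeff_X_add_one_pow] at h1
  have h2 : ∀ j, ((X:ℂ[X])^j * (X+1)^(N-j)).coeff i
      = if j ≤ i then ((N-j).choose (i-j) : ℂ) else 0 := by
    intro j
    rw [mul_comm, Polynomial.coeff_mul_X_pow', Polynomial.coeff_X_add_one_pow]
  simp only [h2] at h1
  have hstep : ∀ j, ((-1:ℂ))^j * (m.choose j) * (if j ≤ i then ((N-j).choose (i-j) : ℂ) else 0)
      = (if j ≤ i ∧ j ≤ m then ((-1:ℂ))^j * ((N-j).choose (i-j)) * (m.choose j) else 0) := by
    intro j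
    by_cases h : j ≤ i
    · by_cases h' : j ≤ m
      · rw [if_pos h, if_pos ⟨h, h'⟩]; ring
      · have : m.choose j = 0 := Nat.choose_eq_zero_of_lt (by omega)
        simp [h, h', this]
    · simp [h]
  have hsum : ∀ (M : ℕ), (i ≤ M) → (m ≤ M) → ∑ j ∈ Finset.range (m+1), ((-1:ℂ))^j * (m.choose j) * (if j ≤ i then ((N-j).choose (i-j) : ℂ) else 0)
      = ∑ j ∈ Finset.range (i+1), ((-1:ℂ))^j * ((N-j).choose (i-j)) * ((m.choose j)) := by
    intro M hiM hmM
    simp only [hstep]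
    rw [Finset.sum_subset (Finset.range_subset_range.mpr (by omega : m+1 ≤ M+1))
      (fun x hxt hxs => by
        have hxm : ¬ x ≤ m := fun h => hxs (Finset.mem_range.mpr (by omega))
        simp [hxm])]
    rw [← Finset.sum_subset (Finset.range_subset_range.mpr (by omega : i+1 ≤ M+1))
      (fun x hxt hxs => by
        have hxi : ¬ x ≤ i := fun h => hxs (Finset.mem_range.mpr (by omega))
        simp [hxi])]
    refine Finset.sum_congr rfl fun j hj => ?_
    have hji : j ≤ i := Nat.lt_succ_iff.mp (Finset.mem_range.mp hj)
    by_cases h' : j ≤ m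
    · simp [hji, h']
    · have : m.choose j = 0 := Nat.choose_eq_zero_of_lt (by omega)
      simp [hji, h', this]
  rw [← hsum N hi (by omega)]
  exact h1.symm

lemma neg_one_pow_sub (K r : ℕ) (h : r ≤ K) : ((-1:ℂ))^(K-r) = (-1)^K * (-1)^r := by
  have h1 : ((-1:ℂ))^(K-r) * ((-1:ℂ))^r = (-1)^K := by
    rw [← pow_add]; congr 1; omega
  have h2 : ((-1:ℂ))^r * ((-1:ℂ))^r = 1 := by
    rw [← pow_add]; exact Even.neg_one_pow ⟨r, rfl⟩
  calc ((-1:ℂ))^(K-r) = ((-1:ℂ))^(K-r) * (((-1:ℂ))^r * ((-1:ℂ))^r) := by rw [h2, mul_one]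
    _ = (-1)^K * (-1)^r := by rw [← mul_assoc, h1]

lemma G0_mul_F0 (n k : ℕ) (hkn : k ≤ n) : G0 n k * F0 n k = 0 := by
  ext i β : 1
  have hβ : β.val + k + 1 ≤ n := by have := β.isLt; omega
  have hik : i.val ≤ k := Nat.lt_succ_iff.mp i.isLt
  rw [Matrix.mul_apply, Matrix.zero_apply]
  simp only [G0, F0, Matrix.of_apply]
  rw [Fin.sum_univ_eq_sum_range (fun a =>
    Polynomial.C ((a.choose i.val : ℂ)) * X ^ (a - i.val) *
      (if β.val ≤ a ∧ a ≤ β.val + k + 1 then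
        Polynomial.C (((k + 1).choose (a - β.val) : ℂ)) * (-X) ^ (k + 1 - (a - β.val))
      else 0)) (n+1)]
  rw [← Finset.sum_subset
    (show Finset.Icc β.val (β.val+k+1) ⊆ Finset.range (n+1) by
      intro x hx
      rw [Finset.mem_Icc] at hx
      exact Finset.mem_range.mpr (by omega))
    (fun x hx hxn => by
      rw [Finset.mem_Icc] at hxn
      rw [if_neg hxn, mul_zero])]
  rw [← Finset.Ico_add_one_right_eq_Icc, Finset.sum_Ico_eq_sum_range,
    show β.val + k + 1 + 1 - β.val = k+2 from by omega]
  have hterm : ∀ r, r < k+2 →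
      Polynomial.C (((β.val+r).choose i.val : ℂ)) * X ^ (β.val + r - i.val) *
      (if β.val ≤ β.val + r ∧ β.val + r ≤ β.val + k + 1 then
        Polynomial.C (((k + 1).choose (β.val + r - β.val) : ℂ)) * (-X) ^ (k + 1 - (β.val + r - β.val))
      else 0)
      = Polynomial.C (((-1:ℂ))^(k+1-r) * ((k+1).choose r : ℂ) * ((β.val+r).choose i.val : ℂ))
          * X ^ (β.val + k + 1 - i.val) := by
    intro r hr
    rw [if_pos ⟨Nat.le_add_right _ _, by omega⟩, Nat.add_sub_cancel_left]
    by_cases hi : i.val ≤ β.val + r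
    · have hexp : (β.val + r - i.val) + (k+1-r) = β.val + k + 1 - i.val := by omega
      rw [← hexp, pow_add, neg_pow, map_mul, map_mul,
        show Polynomial.C (((-1:ℂ))^(k+1-r)) = ((-1:ℂ[X]))^(k+1-r) from by
          rw [map_pow, map_neg, map_one]]
      ring
    · rw [Nat.choose_eq_zero_of_lt (by omega), Nat.cast_zero, map_zero, zero_mul]
      simp
  rw [Finset.sum_congr rfl (fun r hr => hterm r (Finset.mem_range.mp hr))]
  rw [← Finset.sum_mul, ← map_sum]
  have : ∑ r ∈ Finset.range (k+2),
      ((-1:ℂ))^(k+1-r) * ((k+1).choose r : ℂ) * ((β.val+r).choose i.val : ℂ) = 0 := by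
    have h5 : ∀ r ∈ Finset.range (k+2),
        ((-1:ℂ))^(k+1-r) * ((k+1).choose r : ℂ) * ((β.val+r).choose i.val : ℂ)
        = ((-1:ℂ))^(k+1) * (((-1:ℂ))^r * ((k+1).choose r : ℂ) * ((β.val+r).choose i.val : ℂ)) :=
      fun r hr => by
        rw [neg_one_pow_sub (k+1) r (Nat.lt_succ_iff.mp (Finset.mem_range.mp hr))]; ring
    rw [Finset.sum_congr rfl h5, ← Finset.mul_sum, keyGen (k+1) β.val i.val,
      if_neg (by omega), mul_zero, mul_zero]
  rw [this, map_zero, zero_mul]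

noncomputable def H0m (n k : ℕ) (z : ℂ) : Matrix (Fin (n+1)) (Fin (k+1)) ℂ :=
  Matrix.of fun α i =>
    if α.val ≤ i.val then (i.val.choose α.val : ℂ) * (-z)^(i.val - α.val) else 0

lemma G0_mul_H0 (n k : ℕ) (hkn : k ≤ n) (z : ℂ) :
    (G0 n k).map (fun p => p.eval z) * H0m n k z = 1 := by
  ext i' i
  have hik : i.val ≤ k := Nat.lt_succ_iff.mp i.isLt
  rw [Matrix.mul_apply, Matrix.one_apply]
  simp only [G0, H0m, Matrix.map_apply, Matrix.of_apply, eval_mul, eval_C, eval_pow, eval_X]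
  rw [Fin.sum_univ_eq_sum_range (fun a => ((a.choose i'.val : ℂ) * z^(a - i'.val)) *
      (if a ≤ i.val then ((i.val.choose a : ℂ)) * (-z)^(i.val - a) else 0)) (n+1)]
  rw [← Finset.sum_subset (Finset.range_subset_range.mpr (show i.val+1 ≤ n+1 by omega))
      (fun x hx hxs => by
        have hxi : ¬ x ≤ i.val := fun h => hxs (Finset.mem_range.mpr (by omega))
        rw [if_neg hxi, mul_zero])]
  by_cases hii : i'.val ≤ i.val
  · have hterm : ∀ a ∈ Finset.range (i.val+1),
        ((a.choose i'.val : ℂ) * z^(a - i'.val)) *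
        (if a ≤ i.val then ((i.val.choose a : ℂ)) * (-z)^(i.val - a) else 0)
        = ((-1:ℂ))^(i.val) * (((-1:ℂ))^a * (i.val.choose a : ℂ) * (a.choose i'.val : ℂ))
            * z^(i.val - i'.val) := by
      intro a ha
      have hai : a ≤ i.val := Nat.lt_succ_iff.mp (Finset.mem_range.mp ha)
      rw [if_pos hai, neg_pow, neg_one_pow_sub i.val a hai]
      by_cases hia : i'.val ≤ a
      · have hexp : (a - i'.val) + (i.val - a) = i.val - i'.val := by omega
        rw [← hexp, pow_add]
        ring
      · rw [Nat.choose_eq_zero_of_lt (by omega), Nat.cast_zero]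
        ring
    rw [Finset.sum_congr rfl hterm, ← Finset.sum_mul, ← Finset.mul_sum]
    have hkg := keyGen i.val 0 i'.val
    simp only [Nat.zero_add, zero_add] at hkg
    rw [hkg]
    by_cases heq : i'.val = i.val
    · rw [if_pos (Fin.ext heq : i' = i), if_pos (by omega), show i'.val - i.val = 0 by omega,
        Nat.choose_zero_right, show i.val - i'.val = 0 by omega, pow_zero, Nat.cast_one, mul_one,
        mul_one, ← pow_add]
      exact Even.neg_one_pow ⟨i.val, rfl⟩
    · rw [if_neg (fun h : i' = i => heq (by rw [h])), if_neg (by omega)]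
      ring
  · rw [if_neg (fun h : i' = i => hii (by rw [h]))]
    apply Finset.sum_eq_zero; intro a ha
    rw [Nat.choose_eq_zero_of_lt (by
      have := Finset.mem_range.mp ha; omega), Nat.cast_zero, zero_mul, zero_mul]

def emb (n k : ℕ) (γ : Fin (n-k)) : Fin (n+1) := ⟨γ.val + k + 1, by have := γ.isLt; omega⟩

lemma emb_val (n k : ℕ) (γ : Fin (n-k)) : (emb n k γ).val = γ.val + k + 1 := rfl

lemma F0_inj (n k : ℕ) (hkn : k ≤ n) (z : ℂ) :
    Function.Injective fun v : Fin (n-k) → ℂ =>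
      ((F0 n k).map (fun p => p.eval z)).mulVec v := by
  set A := (F0 n k).map (fun p => p.eval z) with hA
  set M : Matrix (Fin (n-k)) (Fin (n-k)) ℂ := A.submatrix (emb n k) id with hM'
  have hM : M.BlockTriangular id := by
    intro γ β hlt
    have hlt' : β.val < γ.val := hlt
    show ((F0 n k) (emb n k γ) β).eval z = 0
    simp only [F0, Matrix.of_apply]
    rw [if_neg (show ¬(β.val ≤ (emb n k γ).val ∧ (emb n k γ).val ≤ β.val + k + 1) by
      rw [emb_val]
      omega), Polynomial.eval_zero]
  have hdiag : ∀ γ, M γ γ = 1 := by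
    intro γ
    show ((F0 n k) (emb n k γ) γ).eval z = 1
    simp only [F0, Matrix.of_apply]
    rw [if_pos (show γ.val ≤ (emb n k γ).val ∧ (emb n k γ).val ≤ γ.val + k + 1 by
      rw [emb_val]; omega), emb_val, show γ.val+k+1-γ.val = k+1 from by omega,
      Nat.choose_self, Nat.sub_self, pow_zero, mul_one, Nat.cast_one, Polynomial.eval_C]
  have hdet : IsUnit M.det := by
    rw [Matrix.det_of_upperTriangular hM, Finset.prod_congr rfl (fun γ _ => hdiag γ),
      Finset.prod_const_one]
    exact isUnit_one
  intro v v' hvv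
  dsimp only at hvv
  have hMv : M.mulVec v = M.mulVec v' := by
    funext γ
    show (A.mulVec v) (emb n k γ) = (A.mulVec v') (emb n k γ)
    rw [hvv]
  calc v = M⁻¹.mulVec (M.mulVec v) := by
        rw [Matrix.mulVec_mulVec, Matrix.nonsing_inv_mul M hdet, Matrix.one_mulVec]
    _ = M⁻¹.mulVec (M.mulVec v') := by rw [hMv]
    _ = v' := by rw [Matrix.mulVec_mulVec, Matrix.nonsing_inv_mul M hdet, Matrix.one_mulVec]

lemma G0_surj (n k : ℕ) (hkn : k ≤ n) (z : ℂ) :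
    Function.Surjective (fun w : Fin (n + 1) → ℂ =>
      ((G0 n k).map (fun p => p.eval z)).mulVec w) := by
  intro y
  refine ⟨(H0m n k z).mulVec y, ?_⟩
  dsimp only
  rw [Matrix.mulVec_mulVec, G0_mul_H0 n k hkn z, Matrix.one_mulVec]

lemma ker_eq_range (n k : ℕ) (hkn : k ≤ n) (z : ℂ) :
    {w : Fin (n + 1) → ℂ | ((G0 n k).map (fun p => p.eval z)).mulVec w = 0} =
      Set.range (fun v : Fin (n - k) → ℂ =>
        ((F0 n k).map (fun p => p.eval z)).mulVec v) := by
  classical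
  set A := (G0 n k).map (fun p => p.eval z) with hA
  set B := (F0 n k).map (fun p => p.eval z) with hB
  have hAB : A * B = 0 := by
    ext i β
    rw [Matrix.mul_apply, Matrix.zero_apply]
    have h0 := congrArg (fun M : Matrix (Fin (k+1)) (Fin (n-k)) (Polynomial ℂ) =>
      ((M i β).eval z)) (G0_mul_F0 n k hkn)
    simp only [Matrix.mul_apply, Matrix.zero_apply, Polynomial.eval_finset_sum,
      Polynomial.eval_mul, Polynomial.eval_zero] at h0
    simpa [hA, hB] using h0
  have hle : LinearMap.range B.mulVecLin ≤ LinearMap.ker A.mulVecLin := by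
    rintro w ⟨v, rfl⟩
    simp only [LinearMap.mem_ker, Matrix.mulVecLin_apply, Matrix.mulVec_mulVec, hAB,
      Matrix.zero_mulVec]
  have hsurj : Function.Surjective A.mulVecLin := by
    intro y
    obtain ⟨w, hw⟩ := G0_surj n k hkn z y
    exact ⟨w, hw⟩
  have hrange_top : LinearMap.range A.mulVecLin = ⊤ := LinearMap.range_eq_top.mpr hsurj
  have hrankA : Module.finrank ℂ (LinearMap.ker A.mulVecLin) = n - k := by
    have h1 := LinearMap.finrank_range_add_finrank_ker A.mulVecLin
    rw [hrange_top] at h1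
    rw [finrank_top, Module.finrank_fin_fun, Module.finrank_fin_fun] at h1
    omega
  have hinjB : Function.Injective B.mulVecLin := by
    intro v v' hv
    exact F0_inj n k hkn z (by simpa [Matrix.mulVecLin_apply] using hv)
  have hrankB : Module.finrank ℂ (LinearMap.range B.mulVecLin) = n - k := by
    rw [LinearMap.finrank_range_of_inj hinjB, Module.finrank_fin_fun]
  have hEq : LinearMap.range B.mulVecLin = LinearMap.ker A.mulVecLin :=
    Submodule.eq_of_le_of_finrank_le hle (by rw [hrankA, hrankB])
  ext w
  constructor
  · intro hw
    have : w ∈ LinearMap.ker A.mulVecLin := by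
      rw [LinearMap.mem_ker, Matrix.mulVecLin_apply]; exact hw
    rw [← hEq] at this
    obtain ⟨v, hv⟩ := this
    exact ⟨v, by simpa [Matrix.mulVecLin_apply] using hv⟩
  · rintro ⟨v, rfl⟩
    show A.mulVec (B.mulVec v) = 0
    rw [Matrix.mulVec_mulVec, hAB, Matrix.zero_mulVec]

noncomputable def G1m (n k : ℕ) : Matrix (Fin (k+1)) (Fin (n+1)) (LaurentPolynomial ℂ) :=
  Matrix.of fun j α =>
    LaurentPolynomial.C (((n - α.val).choose j.val : ℂ)) * T ((α.val : ℤ) + j.val - n)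

lemma isAntiPoly_C_mul_T (c : ℂ) (e : ℤ) (h : e ≤ 0 ∨ c = 0) :
    IsAntiPolyFun (LaurentPolynomial.C c * T e) := by
  intro i hi
  rw [← LaurentPolynomial.single_eq_C_mul_T]
  rcases h with h | h
  · rw [AddMonoidAlgebra.coeff_single, Finsupp.single_apply, if_neg (by omega)]
  · rw [h, AddMonoidAlgebra.single_zero, AddMonoidAlgebra.coeff_zero, Finsupp.coe_zero,
      Pi.zero_apply]

lemma G1m_antiPoly (n k : ℕ) (hkn : k ≤ n) : ∀ i j, IsAntiPolyFun (G1m n k i j) := by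
  intro j α
  have hα : α.val ≤ n := Nat.lt_succ_iff.mp α.isLt
  apply isAntiPoly_C_mul_T
  by_cases h : (α.val : ℤ) + j.val - n ≤ 0
  · exact Or.inl h
  · right
    rw [Nat.choose_eq_zero_of_lt (by omega), Nat.cast_zero]

lemma jT_mul_G1 (n k : ℕ) (hkn : k ≤ n) :
    jetTransition n k * G1m n k = (G0 n k).map (fun p => p.toLaurent) := by
  refine Matrix.ext fun i α => ?_
  have hα : α.val ≤ n := Nat.lt_succ_iff.mp α.isLt
  have hik : i.val ≤ k := Nat.lt_succ_iff.mp i.isLt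
  rw [Matrix.mul_apply]
  simp only [jetTransition, G1m, G0, Matrix.map_apply, Matrix.of_apply]
  rw [Polynomial.toLaurent_C_mul_X_pow]
  rw [Fin.sum_univ_eq_sum_range (fun j =>
    (if j ≤ i.val then
        LaurentPolynomial.C ((-1:ℂ)^j * gbinom ((n:ℤ) - j) (i.val - j)) * T ((n:ℤ) - i.val - j)
      else 0) *
    (LaurentPolynomial.C (((n - α.val).choose j : ℂ)) * T ((α.val : ℤ) + j - n))) (k+1)]
  rw [← Finset.sum_subset (Finset.range_subset_range.mpr (show i.val+1 ≤ k+1 by omega))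
      (fun x hx hxs => by
        have hxi : ¬ x ≤ i.val := fun h => hxs (Finset.mem_range.mpr (by omega))
        rw [if_neg hxi, zero_mul])]
  have hterm : ∀ j ∈ Finset.range (i.val+1),
      (if j ≤ i.val then
          LaurentPolynomial.C ((-1:ℂ)^j * gbinom ((n:ℤ) - j) (i.val - j)) * T ((n:ℤ) - i.val - j)
        else 0) *
      (LaurentPolynomial.C (((n - α.val).choose j : ℂ)) * T ((α.val : ℤ) + j - n))
      = LaurentPolynomial.C ((-1:ℂ)^j * ((n-j).choose (i.val-j) : ℂ) * ((n - α.val).choose j : ℂ))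
          * T ((α.val : ℤ) - i.val) := by
    intro j hj
    have hji : j ≤ i.val := Nat.lt_succ_iff.mp (Finset.mem_range.mp hj)
    rw [if_pos hji]
    have hg : gbinom ((n:ℤ) - j) (i.val - j) = (((n-j).choose (i.val - j) : ℕ) : ℂ) := by
      rw [show (n:ℤ) - j = ((n - j : ℕ) : ℤ) from by omega, gbinom_natCast]
    rw [hg, mul_mul_mul_comm, ← map_mul, ← T_add,
      show (n:ℤ) - i.val - j + ((α.val : ℤ) + j - n) = (α.val : ℤ) - i.val from by ring,
      mul_assoc]
  rw [Finset.sum_congr rfl hterm, ← Finset.sum_mul, ← map_sum,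
    keyB n α.val i.val hα (le_trans hik hkn)]
  by_cases hia : i.val ≤ α.val
  · rw [show ((α.val - i.val : ℕ) : ℤ) = (α.val : ℤ) - i.val from by omega]
  · rw [Nat.choose_eq_zero_of_lt (by omega), Nat.cast_zero, map_zero, zero_mul, zero_mul]

lemma F0_antiPoly (n k : ℕ) (α : Fin (n+1)) (β : Fin (n-k)) :
    IsAntiPolyFun (T (-(k + 1 : ℤ)) * ((F0 n k) α β).toLaurent) := by
  simp only [F0, Matrix.of_apply]
  split
  · next h =>
    have hm : k + 1 - (α.val - β.val) ≤ k + 1 := by omega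
    rw [show (Polynomial.C (((k + 1).choose (α.val - β.val) : ℂ)) *
        (-X) ^ (k + 1 - (α.val - β.val)) : Polynomial ℂ)
        = Polynomial.C (((k + 1).choose (α.val - β.val) : ℂ) * (-1)^(k + 1 - (α.val - β.val)))
            * X ^ (k + 1 - (α.val - β.val)) from by
      rw [map_mul, map_pow, map_neg, map_one]; ring]
    rw [Polynomial.toLaurent_C_mul_X_pow, mul_comm, mul_assoc, ← T_add]
    apply isAntiPoly_C_mul_T
    left
    omega
  · intro i hi
    rw [map_zero, mul_zero]
    rfl

lemma prod_C_mul_T {ι : Type*} (s : Finset ι) (a : ι → ℂ) (e : ι → ℤ) :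
    ∏ x ∈ s, (LaurentPolynomial.C (a x) * T (e x))
      = LaurentPolynomial.C (∏ x ∈ s, a x) * T (∑ x ∈ s, e x) := by
  induction s using Finset.cons_induction with
  | empty => simp
  | cons i s hi ih =>
    rw [Finset.prod_cons, Finset.prod_cons, Finset.sum_cons, ih, map_mul, T_add]
    ring

lemma sum_aux (n : ℕ) (m : ℕ) : ∑ i ∈ Finset.range m, ((n:ℤ) - i - i) = m * ((n:ℤ) - m + 1) := by
  induction m with
  | zero => simp
  | succ m ih => rw [Finset.sum_range_succ, ih]; push_cast; ring

lemma det_jT (n k : ℕ) (hkn : k ≤ n) :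
    ∃ c : ℂ, c ≠ 0 ∧
      (jetTransition n k).det = LaurentPolynomial.C c * T ((k + 1) * ((n : ℤ) - k)) := by
  have htri : (jetTransition n k).BlockTriangular OrderDual.toDual := by
    intro i j h
    have hij : i.val < j.val := h
    simp only [jetTransition, Matrix.of_apply]
    rw [if_neg (by omega)]
  rw [Matrix.det_of_lowerTriangular _ htri]
  have hdiag : ∀ i : Fin (k+1), jetTransition n k i i
      = LaurentPolynomial.C ((-1:ℂ)^i.val) * T ((n:ℤ) - i.val - i.val) := by
    intro i
    simp only [jetTransition, Matrix.of_apply]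
    rw [if_pos le_rfl, Nat.sub_self]
    congr 1
    rw [show gbinom ((n:ℤ) - i.val) 0 = 1 from by simp [gbinom], mul_one]
  rw [Finset.prod_congr rfl (fun i _ => hdiag i), prod_C_mul_T]
  refine ⟨∏ i : Fin (k+1), (-1:ℂ)^i.val, ?_, ?_⟩
  · exact Finset.prod_ne_zero_iff.mpr fun i _ => pow_ne_zero _ (by norm_num)
  · congr 1
    rw [Fin.sum_univ_eq_sum_range (fun i => (n:ℤ) - i - i) (k+1), sum_aux]
    push_cast
    ring

theorem jet_exact_sequence_large_twist (n k : ℕ) (hkn : k ≤ n) :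
    (∀ z : ℂ,
      Function.Injective (fun v : Fin (n - k) → ℂ =>
        ((F0 n k).map (fun p => p.eval z)).mulVec v) ∧
      Function.Surjective (fun w : Fin (n + 1) → ℂ =>
        ((G0 n k).map (fun p => p.eval z)).mulVec w) ∧
      {w : Fin (n + 1) → ℂ | ((G0 n k).map (fun p => p.eval z)).mulVec w = 0} =
        Set.range (fun v : Fin (n - k) → ℂ =>
          ((F0 n k).map (fun p => p.eval z)).mulVec v)) ∧
    (∃ G1 : Matrix (Fin (k + 1)) (Fin (n + 1)) (LaurentPolynomial ℂ),
      (∀ i j, IsAntiPolyFun (G1 i j)) ∧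
      jetTransition n k * G1 = (G0 n k).map (fun p => p.toLaurent)) ∧
    (∀ α β, IsAntiPolyFun (T (-(k + 1 : ℤ)) * ((F0 n k) α β).toLaurent)) ∧
    (∃ c : ℂ, c ≠ 0 ∧
      (jetTransition n k).det = LaurentPolynomial.C c * T ((k + 1) * ((n : ℤ) - k))) := by
  exact ⟨fun z => ⟨F0_inj n k hkn z, G0_surj n k hkn z, ker_eq_range n k hkn z⟩,
    ⟨G1m n k, G1m_antiPoly n k hkn, jT_mul_G1 n k hkn⟩,
    F0_antiPoly n k, det_jT n k hkn⟩
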